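/- Let μ be the Haar probability measure on the compact group SO(3) and let κ > 0. Define Z = ∫_{SO(3)} exp(κ tr(A)) dμ(A), and for Λ0 ∈ SO(3) define the von Mises–Fisher density M_{Λ0}(A) = Z⁻¹ exp(κ (A·Λ0)). Then: (a) ∫_{SO(3)} M_{Λ0}(A) dμ(A) = 1 for every Λ0 ∈ SO(3); (b) there exists a constant c1 ∈ (0,1), independent of Λ0, such that for every Λ0 ∈ SO(3) the matrix-valued Bochner integral satisfies ∫_{SO(3)} M_{Λ0}(A) A dμ(A) = c1 Λ0 (consistency relation for the flux). -/

import Mathlib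

open Matrix MeasureTheory

/-- `SO3 A` means `A` is a real 3×3 special orthogonal matrix. -/
def SO3 (A : Matrix (Fin 3) (Fin 3) ℝ) : Prop :=
  Aᵀ * A = 1 ∧ A.det = 1

/-- Borel-type σ-algebra on 3×3 real matrices (the product σ-algebra). -/
instance : MeasurableSpace (Matrix (Fin 3) (Fin 3) ℝ) := MeasurableSpace.pi

attribute [local instance] Matrix.normedAddCommGroup Matrix.normedSpace

instance : BorelSpace (Matrix (Fin 3) (Fin 3) ℝ) := Pi.borelSpace

abbrev Mat := Matrix (Fin 3) (Fin 3) ℝ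

instance : TopologicalSpace.PseudoMetrizableSpace Mat :=
  inferInstanceAs (TopologicalSpace.PseudoMetrizableSpace (Fin 3 → Fin 3 → ℝ))

instance : ContinuousENorm Mat := inferInstanceAs (ContinuousENorm (Fin 3 → Fin 3 → ℝ))

instance : SecondCountableTopology Mat := inferInstanceAs (SecondCountableTopology (Fin 3 → Fin 3 → ℝ))

/-! ### Algebraic facts about `SO3` -/

lemma SO3.one : SO3 1 := by constructor <;> simp

lemma SO3.mul {A B : Mat} (hA : SO3 A) (hB : SO3 B) : SO3 (A * B) := by
  obtain ⟨hA1, hA2⟩ := hA; obtain ⟨hB1, hB2⟩ := hB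
  constructor
  · rw [Matrix.transpose_mul]
    have : Bᵀ * Aᵀ * (A * B) = Bᵀ * (Aᵀ * A * B) := by rw [mul_assoc, mul_assoc]
    rw [this, hA1, Matrix.one_mul, hB1]
  · rw [Matrix.det_mul, hA2, hB2]; ring

lemma SO3.mul_transpose {A : Mat} (hA : SO3 A) : A * Aᵀ = 1 :=
  mul_eq_one_comm.mp hA.1

lemma SO3.transpose {A : Mat} (hA : SO3 A) : SO3 Aᵀ := by
  refine ⟨?_, by rw [Matrix.det_transpose]; exact hA.2⟩
  rw [Matrix.transpose_transpose]; exact hA.mul_transpose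

lemma SO3.entry_abs_le {A : Mat} (hA : SO3 A) (i j : Fin 3) :
    |A i j| ≤ 1 := by
  have h := congr_fun (congr_fun hA.1 j) j
  simp [Matrix.mul_apply, Matrix.one_apply, Fin.sum_univ_three, Matrix.transpose_apply] at h
  rw [abs_le]
  fin_cases i <;>
    simp only [Fin.zero_eta, Fin.mk_one, Fin.reduceFinMk] <;>
    constructor <;>
    nlinarith [sq_nonneg (A 0 j), sq_nonneg (A 1 j), sq_nonneg (A 2 j),
      sq_nonneg (A 0 j + 1), sq_nonneg (A 0 j - 1), sq_nonneg (A 1 j + 1),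
      sq_nonneg (A 1 j - 1), sq_nonneg (A 2 j + 1), sq_nonneg (A 2 j - 1)]

lemma SO3.norm_le {A : Mat} (hA : SO3 A) : ‖A‖ ≤ 1 := by
  rw [Matrix.norm_le_iff (by norm_num)]
  intro i j
  simpa [Real.norm_eq_abs] using hA.entry_abs_le i j

lemma SO3.trace_bounds {A : Mat} (hA : SO3 A) :
    -3 ≤ Matrix.trace A ∧ Matrix.trace A ≤ 3 := by
  have h0 := abs_le.mp (hA.entry_abs_le 0 0)
  have h1 := abs_le.mp (hA.entry_abs_le 1 1)
  have h2 := abs_le.mp (hA.entry_abs_le 2 2)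
  rw [Matrix.trace_fin_three]
  constructor <;> linarith [h0.1, h0.2, h1.1, h1.2, h2.1, h2.2]

namespace Statement2Aux

/-! ### Specific rotations -/

def rotR1 : Mat := !![1,0,0;0,-1,0;0,0,-1]
def rotR2 : Mat := !![-1,0,0;0,1,0;0,0,-1]
def rotP : Mat := !![0,1,0;0,0,1;1,0,0]

lemma rotR1_SO3 : SO3 rotR1 := by
  constructor
  · ext i j
    rw [Matrix.mul_apply]
    fin_cases i <;> fin_cases j <;>
      norm_num [Fin.sum_univ_three, Matrix.transpose_apply, Matrix.vecHead, Matrix.vecTail,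
        Fin.ext_iff, rotR1, Matrix.one_apply, Matrix.cons_val_two]
  · norm_num [rotR1, Matrix.det_fin_three, Matrix.cons_val_two]

lemma rotR2_SO3 : SO3 rotR2 := by
  constructor
  · ext i j
    rw [Matrix.mul_apply]
    fin_cases i <;> fin_cases j <;>
      norm_num [Fin.sum_univ_three, Matrix.transpose_apply, Matrix.vecHead, Matrix.vecTail,
        Fin.ext_iff, rotR2, Matrix.one_apply, Matrix.cons_val_two]
  · norm_num [rotR2, Matrix.det_fin_three, Matrix.cons_val_two]

lemma rotP_SO3 : SO3 rotP := by
  constructor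
  · ext i j
    rw [Matrix.mul_apply]
    fin_cases i <;> fin_cases j <;>
      norm_num [Fin.sum_univ_three, Matrix.transpose_apply, Matrix.vecHead, Matrix.vecTail,
        Fin.ext_iff, rotP, Matrix.one_apply, Matrix.cons_val_two]
  · norm_num [rotP, Matrix.det_fin_three, Matrix.cons_val_two]

/-- A matrix commuting with the three generators is scalar. -/
lemma commutant_scalar {N : Mat}
    (h1 : rotR1 * N = N * rotR1) (h2 : rotR2 * N = N * rotR2)
    (h3 : rotP * N = N * rotP) : N = (N 0 0) • (1 : Mat) := by
  have q1 := fun (i j : Fin 3) => congr_fun (congr_fun h1 i) j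
  have q2 := fun (i j : Fin 3) => congr_fun (congr_fun h2 i) j
  have q3 := fun (i j : Fin 3) => congr_fun (congr_fun h3 i) j
  have n01 : N 0 1 = 0 := by
    have := q1 0 1
    simp only [Matrix.mul_apply, Fin.sum_univ_three, rotR1] at this
    norm_num [Matrix.vecHead, Matrix.vecTail, Matrix.cons_val_two] at this; linarith
  have n02 : N 0 2 = 0 := by
    have := q1 0 2
    simp only [Matrix.mul_apply, Fin.sum_univ_three, rotR1] at this
    norm_num [Matrix.vecHead, Matrix.vecTail, Matrix.cons_val_two] at this; linarith
  have n10 : N 1 0 = 0 := by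
    have := q1 1 0
    simp only [Matrix.mul_apply, Fin.sum_univ_three, rotR1] at this
    norm_num [Matrix.vecHead, Matrix.vecTail, Matrix.cons_val_two] at this; linarith
  have n20 : N 2 0 = 0 := by
    have := q1 2 0
    simp only [Matrix.mul_apply, Fin.sum_univ_three, rotR1] at this
    norm_num [Matrix.vecHead, Matrix.vecTail, Matrix.cons_val_two] at this; linarith
  have n12 : N 1 2 = 0 := by
    have := q2 1 2
    simp only [Matrix.mul_apply, Fin.sum_univ_three, rotR2] at this
    norm_num [Matrix.vecHead, Matrix.vecTail, Matrix.cons_val_two] at this; linarith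
  have n21 : N 2 1 = 0 := by
    have := q2 2 1
    simp only [Matrix.mul_apply, Fin.sum_univ_three, rotR2] at this
    norm_num [Matrix.vecHead, Matrix.vecTail, Matrix.cons_val_two] at this; linarith
  have n11 : N 1 1 = N 0 0 := by
    have := q3 0 1
    simp only [Matrix.mul_apply, Fin.sum_univ_three, rotP] at this
    norm_num [Matrix.vecHead, Matrix.vecTail, Matrix.cons_val_two] at this; linarith
  have n22 : N 2 2 = N 1 1 := by
    have := q3 1 2
    simp only [Matrix.mul_apply, Fin.sum_univ_three, rotP] at this
    norm_num [Matrix.vecHead, Matrix.vecTail, Matrix.cons_val_two] at this; linarith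
  ext i j
  fin_cases i <;> fin_cases j <;>
    simp [Matrix.one_apply, n01, n02, n10, n20, n12, n21, n11, n22]

/-- If the traces against nine specific rotations vanish, the matrix is zero. -/
lemma trace_nine_zero {A : Mat}
    (t0 : Matrix.trace A = 0)
    (t1 : Matrix.trace (rotR1 * A) = 0)
    (t2 : Matrix.trace (rotR2 * A) = 0)
    (t3 : Matrix.trace (rotP * A) = 0)
    (t4 : Matrix.trace (rotP * rotP * A) = 0)
    (t5 : Matrix.trace (rotR1 * rotP * A) = 0)
    (t6 : Matrix.trace (rotR2 * rotP * A) = 0)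
    (t7 : Matrix.trace (rotR1 * (rotP * rotP) * A) = 0)
    (t8 : Matrix.trace (rotR2 * (rotP * rotP) * A) = 0) : A = 0 := by
  simp only [Matrix.trace_fin_three, Matrix.mul_apply, Fin.sum_univ_three, rotR1, rotR2, rotP]
    at t0 t1 t2 t3 t4 t5 t6 t7 t8
  norm_num [Matrix.vecHead, Matrix.vecTail, Matrix.cons_val_two] at t0 t1 t2 t3 t4 t5 t6 t7 t8
  ext i j
  fin_cases i <;> fin_cases j <;> simp <;> linarith

/-! ### Continuous linear maps -/

noncomputable def mulRightCLM (Λ : Mat) : Mat →L[ℝ] Mat :=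
  LinearMap.toContinuousLinearMap (LinearMap.mulRight ℝ Λ)

noncomputable def conjCLM (R : Mat) : Mat →L[ℝ] Mat :=
  LinearMap.toContinuousLinearMap
    ((LinearMap.mulLeft ℝ R).comp (LinearMap.mulRight ℝ Rᵀ))

noncomputable def traceCLM : Mat →L[ℝ] ℝ :=
  LinearMap.toContinuousLinearMap (Matrix.traceLinearMap (Fin 3) ℝ ℝ)

/-! ### Measurability -/

lemma measTrace : Measurable (fun A : Mat => Matrix.trace A) :=
  (continuous_id.matrix_trace).measurable

lemma measMulR (R : Mat) : Measurable (fun A : Mat => A * R) :=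
  (continuous_id.matrix_mul continuous_const).measurable

lemma measMulL (R : Mat) : Measurable (fun A : Mat => R * A) :=
  (continuous_const.matrix_mul continuous_id).measurable

lemma measConj (R : Mat) : Measurable (fun A : Mat => R * A * Rᵀ) :=
  ((continuous_const.matrix_mul continuous_id).matrix_mul continuous_const).measurable

/-! ### Integral transformation lemmas -/

lemma integral_pres (μ : Measure Mat) {φ : Mat → Mat} (hφ : Measurable φ) (hmap : μ.map φ = μ)
    {E : Type*} [NormedAddCommGroup E] [NormedSpace ℝ E] (f : Mat → E)
    (hf : AEStronglyMeasurable f μ) : ∫ x, f (φ x) ∂μ = ∫ x, f x ∂μ := by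
  conv_rhs => rw [← hmap]
  rw [integral_map hφ.aemeasurable (by rwa [hmap])]

lemma ae_pres (μ : Measure Mat) {φ : Mat → Mat} (hφ : Measurable φ) (hmap : μ.map φ = μ)
    {s : Set Mat} (hs : MeasurableSet s) (h : ∀ᵐ x ∂μ, x ∈ s) : ∀ᵐ x ∂μ, φ x ∈ s :=
  (MeasureTheory.ae_map_iff hφ.aemeasurable hs).mp (by rw [hmap]; exact h)

lemma pointwise_sign (κ t : ℝ) (hκ : 0 < κ) : 0 ≤ t * (Real.exp (κ * t) - 1) := by
  rcases le_or_gt 0 t with ht | ht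
  · have h1 : 0 ≤ Real.exp (κ * t) - 1 := by nlinarith [Real.add_one_le_exp (κ * t)]
    exact mul_nonneg ht h1
  · have h1 : Real.exp (κ * t) ≤ 1 := Real.exp_le_one_iff.mpr (by nlinarith)
    nlinarith

end Statement2Aux

open Statement2Aux

/-- let `μ` be the Haar probability measure on `SO(3)` (encoded as a
probability measure on 3×3 matrices, carried by `SO(3)` and invariant under left and
right translations by elements of `SO(3)`), let `κ > 0`, and let
`Z = ∫ exp(κ tr A) dμ(A)`.  For `Λ0 ∈ SO(3)` set
`M_{Λ0}(A) = Z⁻¹ exp(κ (A·Λ0))` with `A·Λ0 = tr(A Λ0ᵀ)`.  Then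
(a) each `M_{Λ0}` is a probability density for `μ`; and
(b) there is a constant `c1 ∈ (0,1)`, independent of `Λ0`, with
`∫ M_{Λ0}(A) A dμ(A) = c1 Λ0` for every `Λ0 ∈ SO(3)`. -/
theorem statement2 (μ : Measure (Matrix (Fin 3) (Fin 3) ℝ))
    [IsProbabilityMeasure μ]
    (hcarrier : ∀ᵐ A ∂μ, SO3 A)
    (hleft : ∀ R : Matrix (Fin 3) (Fin 3) ℝ, SO3 R → μ.map (fun A => R * A) = μ)
    (hright : ∀ R : Matrix (Fin 3) (Fin 3) ℝ, SO3 R → μ.map (fun A => A * R) = μ)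
    (κ : ℝ) (hκ : 0 < κ) :
    (∀ Λ0 : Matrix (Fin 3) (Fin 3) ℝ, SO3 Λ0 →
      ∫ A, (∫ B, Real.exp (κ * Matrix.trace B) ∂μ)⁻¹ *
        Real.exp (κ * Matrix.trace (A * Λ0ᵀ)) ∂μ = 1) ∧
    (∃ c1 : ℝ, 0 < c1 ∧ c1 < 1 ∧
      ∀ Λ0 : Matrix (Fin 3) (Fin 3) ℝ, SO3 Λ0 →
        (∫ A, ((∫ B, Real.exp (κ * Matrix.trace B) ∂μ)⁻¹ *
          Real.exp (κ * Matrix.trace (A * Λ0ᵀ))) • A ∂μ) = c1 • Λ0) := by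
  classical
  set Z := ∫ B, Real.exp (κ * Matrix.trace B) ∂μ with hZ
  have measE : Measurable (fun A : Mat => Real.exp (κ * Matrix.trace A)) :=
    Real.measurable_exp.comp (measurable_const.mul measTrace)
  have intE : Integrable (fun A : Mat => Real.exp (κ * Matrix.trace A)) μ := by
    refine (integrable_const (Real.exp (3 * κ))).mono' measE.aestronglyMeasurable ?_
    filter_upwards [hcarrier] with A hA
    rw [Real.norm_eq_abs, abs_of_pos (Real.exp_pos _)]
    exact Real.exp_le_exp.mpr (by nlinarith [hA.trace_bounds.2])
  have hZpos : 0 < Z := by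
    have hlb : ∫ (_ : Mat), Real.exp (-(3 * κ)) ∂μ ≤ Z := by
      refine integral_mono_ae (integrable_const _) intE ?_
      filter_upwards [hcarrier] with A hA
      exact Real.exp_le_exp.mpr (by nlinarith [hA.trace_bounds.1])
    simp only [MeasureTheory.integral_const, measure_univ, ENNReal.toReal_one, probReal_univ, one_smul] at hlb
    exact lt_of_lt_of_le (Real.exp_pos _) hlb
  have hEshift : ∀ Λ0 : Mat, SO3 Λ0 →
      ∫ A, Real.exp (κ * Matrix.trace (A * Λ0ᵀ)) ∂μ = Z := by
    intro Λ0 hΛ0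
    have hmeas2 : Measurable (fun A : Mat => Real.exp (κ * Matrix.trace (A * Λ0ᵀ))) :=
      Real.measurable_exp.comp (measurable_const.mul (measTrace.comp (measMulR Λ0ᵀ)))
    have h := integral_pres μ (measMulR Λ0) (hright Λ0 hΛ0)
      (fun A => Real.exp (κ * Matrix.trace (A * Λ0ᵀ))) hmeas2.aestronglyMeasurable
    rw [← h, hZ]
    have key : ∀ A : Mat, (A * Λ0) * Λ0ᵀ = A := fun A => by
      rw [mul_assoc, hΛ0.mul_transpose, mul_one]
    simp only [key]
  constructor
  · intro Λ0 hΛ0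
    rw [MeasureTheory.integral_const_mul, hEshift Λ0 hΛ0, inv_mul_cancel₀ hZpos.ne']
  -- part (b)
  have measF : Measurable (fun A : Mat => Real.exp (κ * Matrix.trace A) • A) :=
    measE.smul measurable_id
  have intF : Integrable (fun A : Mat => Real.exp (κ * Matrix.trace A) • A) μ := by
    refine (integrable_const (Real.exp (3 * κ))).mono' measF.aestronglyMeasurable ?_
    filter_upwards [hcarrier] with A hA
    rw [norm_smul, Real.norm_eq_abs, abs_of_pos (Real.exp_pos _)]
    calc Real.exp (κ * Matrix.trace A) * ‖A‖
        ≤ Real.exp (3 * κ) * 1 :=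
          mul_le_mul (Real.exp_le_exp.mpr (by nlinarith [hA.trace_bounds.2]))
            hA.norm_le (norm_nonneg _) (Real.exp_pos _).le
      _ = Real.exp (3 * κ) := mul_one _
  set N := ∫ A, Real.exp (κ * Matrix.trace A) • A ∂μ with hN
  have hG : ∀ Λ0 : Mat, SO3 Λ0 →
      ∫ A, Real.exp (κ * Matrix.trace (A * Λ0ᵀ)) • A ∂μ = N * Λ0 := by
    intro Λ0 hΛ0
    have measG : Measurable (fun A : Mat => Real.exp (κ * Matrix.trace (A * Λ0ᵀ)) • A) :=
      (Real.measurable_exp.comp (measurable_const.mul (measTrace.comp (measMulR Λ0ᵀ)))).smul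
        measurable_id
    have h := integral_pres μ (measMulR Λ0) (hright Λ0 hΛ0)
      (fun A => Real.exp (κ * Matrix.trace (A * Λ0ᵀ)) • A) measG.aestronglyMeasurable
    rw [← h]
    have hsimp : ∀ A : Mat, Real.exp (κ * Matrix.trace ((A * Λ0) * Λ0ᵀ)) • (A * Λ0)
        = (Real.exp (κ * Matrix.trace A) • A) * Λ0 := by
      intro A
      rw [mul_assoc, hΛ0.mul_transpose, mul_one, smul_mul_assoc]
    simp only [hsimp]
    have h2 : ∫ x, (Real.exp (κ * Matrix.trace x) • x) * Λ0 ∂μ = N * Λ0 :=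
      (mulRightCLM Λ0).integral_comp_comm intF
    simpa [mulRightCLM] using h2
  have hcomm : ∀ R : Mat, SO3 R → R * N = N * R := by
    intro R hR
    have hmapconj : μ.map (fun A : Mat => R * A * Rᵀ) = μ := by
      have hcomp : (fun A : Mat => R * A * Rᵀ)
          = (fun A : Mat => R * A) ∘ (fun A : Mat => A * Rᵀ) := by
        funext A; simp [Function.comp, mul_assoc]
      rw [hcomp, ← Measure.map_map (measMulL R) (measMulR Rᵀ), hright Rᵀ hR.transpose,
        hleft R hR]
    have h := integral_pres μ (measConj R) hmapconj
      (fun A => Real.exp (κ * Matrix.trace A) • A) measF.aestronglyMeasurable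
    have hsimp : ∀ A : Mat, Real.exp (κ * Matrix.trace (R * A * Rᵀ)) • (R * A * Rᵀ)
        = R * (Real.exp (κ * Matrix.trace A) • A) * Rᵀ := by
      intro A
      have ht : Matrix.trace (R * A * Rᵀ) = Matrix.trace A := by
        rw [Matrix.trace_mul_cycle, hR.1, Matrix.one_mul]
      rw [ht, Matrix.mul_smul, Matrix.smul_mul]
    simp only [hsimp] at h
    have h2 : ∫ A, R * (Real.exp (κ * Matrix.trace A) • A) * Rᵀ ∂μ = R * N * Rᵀ := by
      have : ∫ x, R * ((Real.exp (κ * Matrix.trace x) • x) * Rᵀ) ∂μ = R * (N * Rᵀ) :=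
        (conjCLM R).integral_comp_comm intF
      simpa [conjCLM, mul_assoc] using this
    rw [h2] at h
    calc R * N = R * N * (Rᵀ * R) := by rw [hR.1, mul_one]
      _ = (R * N * Rᵀ) * R := by rw [mul_assoc, ← mul_assoc, ← mul_assoc]
      _ = N * R := by rw [h]
  have hscalar : N = N 0 0 • (1 : Mat) :=
    commutant_scalar (hcomm rotR1 rotR1_SO3) (hcomm rotR2 rotR2_SO3) (hcomm rotP rotP_SO3)
  -- trace of N
  have htrN : ∫ A, Real.exp (κ * Matrix.trace A) * Matrix.trace A ∂μ = Matrix.trace N := by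
    have h : ∫ x, Matrix.trace (Real.exp (κ * Matrix.trace x) • x) ∂μ = Matrix.trace N :=
      traceCLM.integral_comp_comm intF
    simp only [traceCLM, LinearMap.coe_toContinuousLinearMap', Matrix.traceLinearMap_apply,
      Matrix.trace_smul, smul_eq_mul] at h
    exact h
  set I := ∫ A, Real.exp (κ * Matrix.trace A) * Matrix.trace A ∂μ with hI
  have htrsc : Matrix.trace N = N 0 0 * 3 := by
    conv_lhs => rw [hscalar]
    rw [Matrix.trace_smul, Matrix.trace_one]
    norm_num
  have hN00 : N 0 0 = I / 3 := by
    have := htrN; rw [htrsc] at this; linarith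
  -- mean of the trace is zero
  have intT : Integrable (fun A : Mat => Matrix.trace A) μ := by
    refine (integrable_const (3:ℝ)).mono' measTrace.aestronglyMeasurable ?_
    filter_upwards [hcarrier] with A hA
    rw [Real.norm_eq_abs, abs_le]
    exact ⟨hA.trace_bounds.1, hA.trace_bounds.2⟩
  have intTR : ∀ R : Mat, SO3 R → Integrable (fun A : Mat => Matrix.trace (R * A)) μ := by
    intro R hR
    refine (integrable_const (3:ℝ)).mono' (measTrace.comp (measMulL R)).aestronglyMeasurable ?_
    filter_upwards [hcarrier] with A hA
    have hb := (hR.mul hA).trace_bounds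
    rw [Real.norm_eq_abs, abs_le]
    exact ⟨hb.1, hb.2⟩
  have eRtr : ∀ R : Mat, SO3 R → ∫ A, Matrix.trace (R * A) ∂μ = ∫ A, Matrix.trace A ∂μ :=
    fun R hR => integral_pres μ (measMulL R) (hleft R hR)
      (fun A => Matrix.trace A) measTrace.aestronglyMeasurable
  have hmean : ∫ A, Matrix.trace A ∂μ = 0 := by
    have hzero : ∀ A : Mat, Matrix.trace A + Matrix.trace (rotR1 * A) + Matrix.trace (rotR2 * A)
        + Matrix.trace (rotR1 * rotR2 * A) = 0 := by
      intro A
      simp only [Matrix.trace_fin_three, Matrix.mul_apply, Fin.sum_univ_three, rotR1, rotR2]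
      norm_num [Matrix.vecHead, Matrix.vecTail, Matrix.cons_val_two]
      ring
    have h4 : ∫ A, (Matrix.trace A + Matrix.trace (rotR1 * A) + Matrix.trace (rotR2 * A)
        + Matrix.trace (rotR1 * rotR2 * A)) ∂μ = 0 := by
      simp only [hzero, integral_zero]
    have i1 : Integrable (fun A : Mat => Matrix.trace A + Matrix.trace (rotR1 * A)) μ :=
      intT.add (intTR rotR1 rotR1_SO3)
    have i2 : Integrable (fun A : Mat => Matrix.trace A + Matrix.trace (rotR1 * A)
        + Matrix.trace (rotR2 * A)) μ := i1.add (intTR rotR2 rotR2_SO3)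
    rw [integral_add i2 (intTR (rotR1 * rotR2) (rotR1_SO3.mul rotR2_SO3)),
      integral_add i1 (intTR rotR2 rotR2_SO3),
      integral_add intT (intTR rotR1 rotR1_SO3),
      eRtr rotR1 rotR1_SO3, eRtr rotR2 rotR2_SO3,
      eRtr (rotR1*rotR2) (rotR1_SO3.mul rotR2_SO3)] at h4
    linarith
  -- positivity of I
  have measG2 : Measurable (fun A : Mat => Matrix.trace A * (Real.exp (κ * Matrix.trace A) - 1)) :=
    measTrace.mul (measE.sub measurable_const)
  have intG2 : Integrable (fun A : Mat => Matrix.trace A * (Real.exp (κ * Matrix.trace A) - 1)) μ := by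
    refine (integrable_const (3 * (Real.exp (3*κ) + 1))).mono' measG2.aestronglyMeasurable ?_
    filter_upwards [hcarrier] with A hA
    rw [Real.norm_eq_abs, abs_mul]
    have h1 : |Matrix.trace A| ≤ 3 := abs_le.mpr ⟨hA.trace_bounds.1, hA.trace_bounds.2⟩
    have h2 : |Real.exp (κ * Matrix.trace A) - 1| ≤ Real.exp (3*κ) + 1 := by
      rw [abs_le]
      have := Real.exp_pos (κ * Matrix.trace A)
      have hle : Real.exp (κ * Matrix.trace A) ≤ Real.exp (3*κ) :=
        Real.exp_le_exp.mpr (by nlinarith [hA.trace_bounds.2])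
      constructor <;> nlinarith [Real.exp_pos (3*κ)]
    exact mul_le_mul h1 h2 (abs_nonneg _) (by norm_num)
  have hIg : I = ∫ A, Matrix.trace A * (Real.exp (κ * Matrix.trace A) - 1) ∂μ := by
    rw [hI]
    have hsplit : (fun A : Mat => Real.exp (κ * Matrix.trace A) * Matrix.trace A)
        = fun A : Mat => Matrix.trace A * (Real.exp (κ * Matrix.trace A) - 1) + Matrix.trace A := by
      funext A; ring
    rw [hsplit, integral_add intG2 intT, hmean, add_zero]
  have hGnn : 0 ≤ ∫ A, Matrix.trace A * (Real.exp (κ * Matrix.trace A) - 1) ∂μ :=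
    integral_nonneg fun A => pointwise_sign κ _ hκ
  have hs0 : MeasurableSet {B : Mat | Matrix.trace B = 0} :=
    measTrace (measurableSet_singleton 0)
  have hGne : (∫ A, Matrix.trace A * (Real.exp (κ * Matrix.trace A) - 1) ∂μ) ≠ 0 := by
    intro h0
    have hg0 : (fun A : Mat => Matrix.trace A * (Real.exp (κ * Matrix.trace A) - 1)) =ᵐ[μ] 0 :=
      (integral_eq_zero_iff_of_nonneg_ae
        (Filter.Eventually.of_forall fun A => pointwise_sign κ _ hκ) intG2).mp h0
    have htr0 : ∀ᵐ A ∂μ, Matrix.trace A = 0 := by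
      filter_upwards [hg0] with A hA
      rcases mul_eq_zero.mp hA with h | h
      · exact h
      · have hexp : Real.exp (κ * Matrix.trace A) = Real.exp 0 := by
          rw [Real.exp_zero]; linarith
        have := Real.exp_eq_exp.mp hexp
        rcases mul_eq_zero.mp this with h' | h'
        · exact absurd h' hκ.ne'
        · exact h'
    have h9 : ∀ R : Mat, SO3 R → ∀ᵐ A ∂μ, Matrix.trace (R * A) = 0 := fun R hR =>
      ae_pres μ (measMulL R) (hleft R hR) hs0 htr0
    have hfalse : ∀ᵐ _A ∂μ, False := by
      filter_upwards [hcarrier, htr0, h9 rotR1 rotR1_SO3, h9 rotR2 rotR2_SO3,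
        h9 rotP rotP_SO3, h9 (rotP * rotP) (rotP_SO3.mul rotP_SO3),
        h9 (rotR1 * rotP) (rotR1_SO3.mul rotP_SO3), h9 (rotR2 * rotP) (rotR2_SO3.mul rotP_SO3),
        h9 (rotR1 * (rotP * rotP)) (rotR1_SO3.mul (rotP_SO3.mul rotP_SO3)),
        h9 (rotR2 * (rotP * rotP)) (rotR2_SO3.mul (rotP_SO3.mul rotP_SO3))] with
        A hA h0 h1 h2 h3 h4 h5 h6 h7 h8
      have hz : A = 0 := trace_nine_zero h0 h1 h2 h3 h4 h5 h6 h7 h8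
      rw [hz] at hA
      simpa using hA.2
    have hμ0 : μ = 0 := by simpa using Filter.eventually_false_iff_eq_bot.mp hfalse
    have hone : (μ Set.univ) = 1 := measure_univ
    rw [hμ0] at hone
    simp at hone
  have hIpos : 0 < I := by
    rw [hIg]
    exact lt_of_le_of_ne hGnn (Ne.symm hGne)
  -- I < 3 Z
  have measET : Measurable (fun A : Mat => Real.exp (κ * Matrix.trace A) * Matrix.trace A) :=
    measE.mul measTrace
  have intET : Integrable (fun A : Mat => Real.exp (κ * Matrix.trace A) * Matrix.trace A) μ := by
    refine (integrable_const (Real.exp (3*κ) * 3)).mono' measET.aestronglyMeasurable ?_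
    filter_upwards [hcarrier] with A hA
    rw [Real.norm_eq_abs, abs_mul, abs_of_pos (Real.exp_pos _)]
    have h1 : |Matrix.trace A| ≤ 3 := abs_le.mpr ⟨hA.trace_bounds.1, hA.trace_bounds.2⟩
    have hle : Real.exp (κ * Matrix.trace A) ≤ Real.exp (3*κ) :=
      Real.exp_le_exp.mpr (by nlinarith [hA.trace_bounds.2])
    exact mul_le_mul hle h1 (abs_nonneg _) (Real.exp_pos _).le
  have measD : Measurable (fun A : Mat => (3 - Matrix.trace A) * Real.exp (κ * Matrix.trace A)) :=
    (measurable_const.sub measTrace).mul measE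
  have intD : Integrable (fun A : Mat => (3 - Matrix.trace A) * Real.exp (κ * Matrix.trace A)) μ := by
    refine (integrable_const (6 * Real.exp (3*κ))).mono' measD.aestronglyMeasurable ?_
    filter_upwards [hcarrier] with A hA
    rw [Real.norm_eq_abs, abs_mul, abs_of_pos (Real.exp_pos _)]
    have h1 : |3 - Matrix.trace A| ≤ 6 := abs_le.mpr (by constructor <;>
      linarith [hA.trace_bounds.1, hA.trace_bounds.2])
    have hle : Real.exp (κ * Matrix.trace A) ≤ Real.exp (3*κ) :=
      Real.exp_le_exp.mpr (by nlinarith [hA.trace_bounds.2])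
    exact mul_le_mul h1 hle (Real.exp_pos _).le (by norm_num)
  have hDval : ∫ A, (3 - Matrix.trace A) * Real.exp (κ * Matrix.trace A) ∂μ = 3 * Z - I := by
    have hsplit : (fun A : Mat => (3 - Matrix.trace A) * Real.exp (κ * Matrix.trace A))
        = fun A : Mat => 3 * Real.exp (κ * Matrix.trace A)
          - Real.exp (κ * Matrix.trace A) * Matrix.trace A := by
      funext A; ring
    rw [hsplit, integral_sub (intE.const_mul 3) intET, MeasureTheory.integral_const_mul, ← hZ, ← hI]
  have hDnn : 0 ≤ ∫ A, (3 - Matrix.trace A) * Real.exp (κ * Matrix.trace A) ∂μ := by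
    refine integral_nonneg_of_ae ?_
    filter_upwards [hcarrier] with A hA
    exact mul_nonneg (by linarith [hA.trace_bounds.2]) (Real.exp_pos _).le
  have hs3 : MeasurableSet {B : Mat | Matrix.trace B = 3} :=
    measTrace (measurableSet_singleton 3)
  have hDne : (∫ A, (3 - Matrix.trace A) * Real.exp (κ * Matrix.trace A) ∂μ) ≠ 0 := by
    intro h0
    have hd0 : (fun A : Mat => (3 - Matrix.trace A) * Real.exp (κ * Matrix.trace A)) =ᵐ[μ] 0 := by
      refine (integral_eq_zero_iff_of_nonneg_ae ?_ intD).mp h0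
      filter_upwards [hcarrier] with A hA
      exact mul_nonneg (by linarith [hA.trace_bounds.2]) (Real.exp_pos _).le
    have htr3 : ∀ᵐ A ∂μ, Matrix.trace A = 3 := by
      filter_upwards [hcarrier, hd0] with A hA hd
      rcases mul_eq_zero.mp hd with h | h
      · linarith
      · exact absurd h (Real.exp_pos _).ne'
    have h3R : ∀ᵐ A ∂μ, Matrix.trace (rotR1 * A) = 3 :=
      ae_pres μ (measMulL rotR1) (hleft rotR1 rotR1_SO3) hs3 htr3
    have hfalse : ∀ᵐ _A ∂μ, False := by
      filter_upwards [hcarrier, htr3, h3R] with A hA hA3 hR3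
      have b0 := abs_le.mp (hA.entry_abs_le 0 0)
      have b1 := abs_le.mp (hA.entry_abs_le 1 1)
      have b2 := abs_le.mp (hA.entry_abs_le 2 2)
      rw [Matrix.trace_fin_three] at hA3
      simp only [Matrix.trace_fin_three, Matrix.mul_apply, Fin.sum_univ_three, rotR1] at hR3
      norm_num [Matrix.vecHead, Matrix.vecTail, Matrix.cons_val_two] at hR3
      linarith [b0.1, b0.2, b1.1, b1.2, b2.1, b2.2]
    have hμ0 : μ = 0 := by simpa using Filter.eventually_false_iff_eq_bot.mp hfalse
    have hone : (μ Set.univ) = 1 := measure_univ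
    rw [hμ0] at hone
    simp at hone
  have hIlt : I < 3 * Z := by
    have := lt_of_le_of_ne hDnn (Ne.symm hDne)
    rw [hDval] at this
    linarith
  -- assemble
  refine ⟨Z⁻¹ * N 0 0, ?_, ?_, ?_⟩
  · have hN00pos : 0 < N 0 0 := by rw [hN00]; linarith
    exact mul_pos (inv_pos.mpr hZpos) hN00pos
  · rw [hN00, mul_comm, ← div_eq_mul_inv]
    exact (div_lt_one hZpos).mpr (by linarith)
  · intro Λ0 hΛ0
    have hNmul : N * Λ0 = N 0 0 • Λ0 := by
      conv_lhs => rw [hscalar]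
      rw [smul_mul_assoc, one_mul]
    calc ∫ A, (Z⁻¹ * Real.exp (κ * Matrix.trace (A * Λ0ᵀ))) • A ∂μ
        = ∫ A, Z⁻¹ • (Real.exp (κ * Matrix.trace (A * Λ0ᵀ)) • A) ∂μ := by
          simp only [← smul_smul]
      _ = Z⁻¹ • ∫ A, Real.exp (κ * Matrix.trace (A * Λ0ᵀ)) • A ∂μ := integral_smul _ _
      _ = Z⁻¹ • (N * Λ0) := by rw [hG Λ0 hΛ0]
      _ = (Z⁻¹ * N 0 0) • Λ0 := by rw [hNmul, smul_smul]
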